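/- Let Y be a metric space and F a max-plus linear form on C_b(Y) (continuous functions Y → ℝ ∪ {-∞} bounded above) that is continuous (preserves nondecreasing converging sequences) and admits a density, i.e., F(φ) = sup_{y∈Y}(φ(y) − f(y)) for some f : Y → ℝ ∪ {±∞}. Then F is tight, meaning inf over compact K ⊂ Y of F(1_{Y∖K}) = −∞, if and only if the lower semicontinuous hull of f is inf-compact, i.e., all sublevel sets {y : f_lsc(y) ≤ α}, α ∈ ℝ, are compact. -/

import Mathlib

open ENNReal EMetric

open Classical in
private lemma maxplus_lsc_ind {Y : Type*} [TopologicalSpace Y] {U : Set Y} (hU : IsOpen U) :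
    LowerSemicontinuous (fun y => if y ∈ U then (0 : EReal) else ⊥) := by
  intro x a ha
  by_cases hx : x ∈ U
  · simp only [hx, if_pos] at ha
    filter_upwards [hU.mem_nhds hx] with y hy
    simpa [hy] using ha
  · simp only [hx, if_neg, not_false_iff] at ha
    exact absurd ha not_lt_bot

/-- Key lemma: for a continuous `ψ` avoiding `⊤`, the sup of `ψ - f` dominates
`ψ y₀ - flsc y₀` where `flsc` is the lsc hull of `f`. -/
private lemma maxplus_key {Y : Type*} [TopologicalSpace Y] (f ψ : Y → EReal)
    (hcont : Continuous ψ) (hb : ∀ y, ψ y < ⊤) (y0 : Y) :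
    ψ y0 + (-(⨆ g ∈ {g : Y → EReal | LowerSemicontinuous g ∧ g ≤ f}, g y0))
      ≤ ⨆ y, ψ y + (-(f y)) := by
  set flsc : Y → EReal := fun y => ⨆ g ∈ {g : Y → EReal | LowerSemicontinuous g ∧ g ≤ f}, g y
    with hflsc_def
  set c : EReal := ⨆ y, ψ y + (-(f y)) with hc_def
  show ψ y0 + (-(flsc y0)) ≤ c
  rcases eq_or_ne c ⊤ with hctop | hctop
  · rw [hctop]; exact le_top
  rcases eq_or_ne c ⊥ with hcbot | hcbot
  · -- degenerate case: for every `y`, `ψ y = ⊥` or `f y = ⊤`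
    have hall : ∀ y, ψ y + (-(f y)) = ⊥ := by
      intro y
      have := le_iSup (fun y => ψ y + (-(f y))) y
      rw [← hc_def, hcbot] at this
      exact le_bot_iff.mp this
    have hkey : ∀ y, ψ y ≠ ⊥ → f y = ⊤ := by
      intro y hy
      rcases EReal.add_eq_bot_iff.mp (hall y) with h | h
      · exact absurd h hy
      · rwa [EReal.neg_eq_bot_iff] at h
    rcases eq_or_ne (ψ y0) ⊥ with hy0 | hy0
    · rw [hy0, EReal.bot_add, hcbot]
    · -- show flsc y0 = ⊤ using the lsc minorant which is ⊤ on {ψ ≠ ⊥}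
      set g : Y → EReal := fun y => if ψ y = ⊥ then ⊥ else ⊤ with hg_def
      have hUopen : IsOpen {y | ψ y ≠ ⊥} := by
        have : {y | ψ y ≠ ⊥} = ψ ⁻¹' ({⊥}ᶜ) := rfl
        rw [this]
        exact (isClosed_singleton.preimage hcont).isOpen_compl
      have hg_lsc : LowerSemicontinuous g := by
        intro x a ha
        by_cases hx : ψ x = ⊥
        · simp only [hg_def, hx, if_pos] at ha
          exact absurd ha not_lt_bot
        · filter_upwards [hUopen.mem_nhds hx] with y hy
          have : g y = ⊤ := by simp [hg_def, hy]
          rw [this]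
          exact lt_of_lt_of_le ha le_top
      have hg_le : g ≤ f := by
        intro y
        by_cases hy : ψ y = ⊥
        · simp [hg_def, hy]
        · simp only [hg_def, hy, if_neg, not_false_iff]
          exact (hkey y hy).ge
      have hg_flsc : g y0 ≤ flsc y0 := by
        rw [hflsc_def]
        exact le_iSup₂_of_le g ⟨hg_lsc, hg_le⟩ le_rfl
      have : flsc y0 = ⊤ := by
        have : g y0 = ⊤ := by simp [hg_def, hy0]
        exact top_le_iff.mp (this ▸ hg_flsc)
      rw [this]
      simp only [EReal.neg_top]
      rw [EReal.add_bot, hcbot]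
  · -- main case: c is a real number
    obtain ⟨r, hr⟩ : ∃ r : ℝ, c = (r : EReal) := ⟨c.toReal, (EReal.coe_toReal hctop hcbot).symm⟩
    set g : Y → EReal := fun y => ψ y + (-(r : EReal)) with hg_def
    have hg_cont : Continuous g := by
      rw [continuous_iff_continuousAt]
      intro x
      exact ContinuousAt.comp (g := fun p : EReal × EReal => p.1 + p.2)
        (f := fun y => (ψ y, -(r : EReal)))
        (EReal.continuousAt_add (Or.inr (by simp)) (Or.inr (by simp)))
        (hcont.continuousAt.prodMk continuousAt_const)
    have hle : ∀ y, ψ y + (-(f y)) ≤ (r : EReal) := by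
      intro y
      have := le_iSup (fun y => ψ y + (-(f y))) y
      rwa [← hc_def, hr] at this
    have hg_le : g ≤ f := by
      intro y
      rcases eq_or_ne (f y) ⊤ with hfy | hfy
      · rw [hfy]; exact le_top
      rcases eq_or_ne (ψ y) ⊥ with hpy | hpy
      · simp only [hg_def, hpy, EReal.bot_add]; exact bot_le
      rcases eq_or_ne (f y) ⊥ with hfb | hfb
      · exfalso
        have := hle y
        rw [hfb] at this
        simp only [EReal.neg_bot] at this
        rw [EReal.add_top_of_ne_bot hpy] at this
        exact absurd this (by simp)
      · obtain ⟨p, hp⟩ : ∃ p : ℝ, ψ y = (p : EReal) :=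
          ⟨(ψ y).toReal, (EReal.coe_toReal (hb y).ne hpy).symm⟩
        obtain ⟨q, hq⟩ : ∃ q : ℝ, f y = (q : EReal) :=
          ⟨(f y).toReal, (EReal.coe_toReal hfy hfb).symm⟩
        have h1 := hle y
        rw [hp, hq] at h1
        simp only [hg_def, hp, hq]
        norm_cast at h1 ⊢
        linarith
    have hg_flsc : g y0 ≤ flsc y0 := by
      rw [hflsc_def]
      exact le_iSup₂_of_le g ⟨hg_cont.lowerSemicontinuous, hg_le⟩ le_rfl
    -- conclude: ψ y0 + (-(flsc y0)) ≤ r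
    rw [hr]
    rcases eq_or_ne (ψ y0) ⊥ with hy0 | hy0
    · rw [hy0, EReal.bot_add]; exact bot_le
    obtain ⟨p, hp⟩ : ∃ p : ℝ, ψ y0 = (p : EReal) :=
      ⟨(ψ y0).toReal, (EReal.coe_toReal (hb y0).ne hy0).symm⟩
    rcases eq_or_ne (flsc y0) ⊤ with hfl | hfl
    · rw [hfl]
      simp only [EReal.neg_top]
      rw [EReal.add_bot]
      exact bot_le
    rcases eq_or_ne (flsc y0) ⊥ with hflb | hflb
    · exfalso
      have h := hg_flsc
      rw [hflb] at h
      simp only [hg_def, hp] at h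
      rw [le_bot_iff, EReal.add_eq_bot_iff] at h
      rcases h with h | h
      · exact absurd h (by simp)
      · rw [EReal.neg_eq_bot_iff] at h
        exact absurd h (by simp)
    · obtain ⟨q, hq⟩ : ∃ q : ℝ, flsc y0 = (q : EReal) :=
        ⟨(flsc y0).toReal, (EReal.coe_toReal hfl hflb).symm⟩
      have h1 := hg_flsc
      simp only [hg_def, hp, hq] at h1 ⊢
      norm_cast at h1 ⊢
      linarith

open Classical in

/-- A continuous max-plus linear form on `C_b(Y)` with density `f`
(`F φ = ⨆ y, φ y - f y`), extended to subsets via its extensions to l.s.c.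
and then to arbitrary functions, is tight (the infimum over compact `K` of
`F(1_{Y∖K})` equals `-∞`) if and only if the lower semicontinuous hull of `f`
is inf-compact (all real sublevel sets are compact). -/
theorem tight_iff_lsc_hull_infCompact {Y : Type*} [MetricSpace Y]
    (f : Y → EReal) :
    let Cb : Set (Y → EReal) := {ψ | Continuous ψ ∧ ∃ c : ℝ, ∀ y, ψ y ≤ (c : EReal)}
    -- extension of `F` to l.s.c. functions
    let Flsc : (Y → EReal) → EReal :=
      fun φ => ⨆ ψ ∈ {ψ ∈ Cb | ψ ≤ φ}, ⨆ y, ψ y + (-(f y))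
    -- maximal extension of `F` to arbitrary functions
    let Fall : (Y → EReal) → EReal :=
      fun φ => ⨅ χ ∈ {χ : Y → EReal | LowerSemicontinuous χ ∧ φ ≤ χ}, Flsc χ
    -- max-plus characteristic function of a set
    let ind : Set Y → Y → EReal := fun A y => if y ∈ A then (0 : EReal) else ⊥
    -- l.s.c. hull of `f`
    let flsc : Y → EReal := fun y => ⨆ g ∈ {g : Y → EReal | LowerSemicontinuous g ∧ g ≤ f}, g y
    (⨅ K ∈ {K : Set Y | IsCompact K}, Fall (ind Kᶜ)) = ⊥ ↔
      ∀ α : ℝ, IsCompact {y | flsc y ≤ (α : EReal)} := by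
  intro Cb Flsc Fall ind flsc
  have hflsc_le : ∀ y, flsc y ≤ f y := fun y => iSup₂_le fun g hg => hg.2 y
  have hflsc_lsc : LowerSemicontinuous flsc :=
    lowerSemicontinuous_biSup fun g hg => hg.1
  -- `Flsc` is monotone, hence `Flsc φ ≤ Fall φ`
  have hFlsc_mono : ∀ φ χ : Y → EReal, φ ≤ χ → Flsc φ ≤ Flsc χ := by
    intro φ χ h
    exact iSup₂_le fun ψ hψ => le_iSup₂_of_le ψ ⟨hψ.1, le_trans hψ.2 h⟩ le_rfl
  have hFlsc_le_Fall : ∀ φ : Y → EReal, Flsc φ ≤ Fall φ :=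
    fun φ => le_iInf₂ fun χ hχ => hFlsc_mono φ χ hχ.2
  constructor
  · -- tight → inf-compact
    intro htight α
    have h1 : (⨅ K ∈ {K : Set Y | IsCompact K}, Fall (ind Kᶜ)) < ((-α : ℝ) : EReal) := by
      rw [htight]; exact bot_lt_iff_ne_bot.mpr (by simp)
    obtain ⟨K, hlt⟩ := iInf_lt_iff.mp h1
    obtain ⟨hK, hlt⟩ := iInf_lt_iff.mp hlt
    have hV : Flsc (ind Kᶜ) < ((-α : ℝ) : EReal) := lt_of_le_of_lt (hFlsc_le_Fall _) hlt
    -- the sublevel set is contained in K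
    have hsub : {y | flsc y ≤ (α : EReal)} ⊆ K := by
      intro y0 hy0
      by_contra hy0K
      have hKc : IsClosed K := hK.isClosed
      set e : ℝ≥0∞ := (infEdist y0 K)⁻¹ with he_def
      have he_top : e ≠ ⊤ := by
        rw [he_def]
        simp only [ne_eq, ENNReal.inv_eq_top]
        intro h0
        exact hy0K (hKc.closure_eq ▸ EMetric.mem_closure_iff_infEdist_zero.mpr h0)
      -- key claim: lower bound on Flsc (ind Kᶜ) from test functions
      have hclaim : ∀ c : ℝ≥0∞, c ≠ 0 → c ≠ ⊤ →
          -(((c * e : ℝ≥0∞)) : EReal) + ((-α : ℝ) : EReal) ≤ Flsc (ind Kᶜ) := by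
        intro c hc0 hcT
        set ψ : Y → EReal := fun y => -(((c * (infEdist y K)⁻¹ : ℝ≥0∞)) : EReal) with hψ_def
        have hψ_cont : Continuous ψ :=
          continuous_neg.comp (continuous_coe_ennreal_ereal.comp
            ((ENNReal.continuous_const_mul hcT).comp
              (continuous_inv.comp continuous_infEdist)))
        have hψ_nonpos : ∀ y, ψ y ≤ (0 : EReal) := by
          intro y
          have h0 : (0 : EReal) ≤ ((c * (infEdist y K)⁻¹ : ℝ≥0∞) : EReal) :=
            EReal.coe_ennreal_nonneg _
          simpa [hψ_def] using EReal.neg_le_neg_iff.mpr h0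
        have hψ_lt_top : ∀ y, ψ y < ⊤ :=
          fun y => lt_of_le_of_lt (hψ_nonpos y) (by norm_num)
        have hψ_mem : ψ ∈ Cb := ⟨hψ_cont, 0, fun y => by exact_mod_cast hψ_nonpos y⟩
        have hψ_le_ind : ψ ≤ ind Kᶜ := by
          intro y
          by_cases hy : y ∈ K
          · have h0 : infEdist y K = 0 := infEdist_zero_of_mem hy
            have : ψ y = ⊥ := by
              rw [hψ_def]
              simp only [h0, ENNReal.inv_zero, ENNReal.mul_top hc0,
                EReal.coe_ennreal_top, EReal.neg_top]
            rw [this]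
            exact bot_le
          · have : ind Kᶜ y = 0 := by simp [ind, hy]
            rw [this]
            exact hψ_nonpos y
        have hlow : (⨆ y, ψ y + (-(f y))) ≤ Flsc (ind Kᶜ) :=
          le_iSup₂ (f := fun (ψ : Y → EReal) (_ : ψ ∈ {ψ ∈ Cb | ψ ≤ ind Kᶜ}) =>
            ⨆ y, ψ y + (-(f y))) ψ ⟨hψ_mem, hψ_le_ind⟩
        have hkey := maxplus_key f ψ hψ_cont hψ_lt_top y0
        have hψy0 : ψ y0 = -(((c * e : ℝ≥0∞)) : EReal) := by rw [hψ_def, he_def]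
        have hneg : -(flsc y0) ≥ ((-α : ℝ) : EReal) := by
          have := EReal.neg_le_neg_iff.mpr hy0
          rwa [show -((α : ℝ) : EReal) = ((-α : ℝ) : EReal) by norm_cast] at this
        calc -(((c * e : ℝ≥0∞)) : EReal) + ((-α : ℝ) : EReal)
            ≤ ψ y0 + (-(flsc y0)) := by rw [hψy0]; exact add_le_add le_rfl hneg
          _ ≤ ⨆ y, ψ y + (-(f y)) := hkey
          _ ≤ Flsc (ind Kᶜ) := hlow
      -- derive the contradiction
      rcases eq_or_ne e 0 with he0 | he0
      · have := hclaim 1 one_ne_zero one_ne_top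
        rw [he0, mul_zero] at this
        simp only [EReal.coe_ennreal_zero, neg_zero, zero_add] at this
        exact absurd hV (not_lt.mpr this)
      · -- Flsc (ind Kᶜ) is a real number v < -α
        have hbot : Flsc (ind Kᶜ) ≠ ⊥ := by
          intro hb
          have := hclaim 1 one_ne_zero one_ne_top
          rw [hb, le_bot_iff, EReal.add_eq_bot_iff] at this
          rcases this with h | h
          · rw [EReal.neg_eq_bot_iff, one_mul, EReal.coe_ennreal_eq_top_iff] at h
            exact he_top h
          · exact absurd h (by simp)
        have htop : Flsc (ind Kᶜ) ≠ ⊤ := (lt_of_lt_of_le hV le_top).ne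
        obtain ⟨v, hv⟩ : ∃ v : ℝ, Flsc (ind Kᶜ) = (v : EReal) :=
          ⟨(Flsc (ind Kᶜ)).toReal, (EReal.coe_toReal htop hbot).symm⟩
        have hvα : v < -α := by
          rw [hv] at hV
          exact_mod_cast hV
        set δ : ℝ := -α - v with hδ_def
        have hδpos : 0 < δ := by rw [hδ_def]; linarith
        set c : ℝ≥0∞ := ENNReal.ofReal (δ / 2) * e⁻¹ with hc_def
        have hc0 : c ≠ 0 := mul_ne_zero
          (by rw [← pos_iff_ne_zero]; exact ENNReal.ofReal_pos.mpr (by linarith))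
          (ENNReal.inv_ne_zero.mpr he_top)
        have hcT : c ≠ ⊤ := ENNReal.mul_ne_top ENNReal.ofReal_ne_top
          (ENNReal.inv_ne_top.mpr he0)
        have hce : c * e = ENNReal.ofReal (δ / 2) := by
          rw [hc_def, mul_assoc, ENNReal.inv_mul_cancel he0 he_top, mul_one]
        have := hclaim c hc0 hcT
        rw [hce, hv] at this
        have hcoe : ((ENNReal.ofReal (δ / 2) : ℝ≥0∞) : EReal) = ((δ / 2 : ℝ) : EReal) := by
          rw [EReal.coe_ennreal_ofReal, max_eq_left (by linarith)]
        rw [hcoe] at this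
        have hfin : -(δ / 2) + -α ≤ v := by exact_mod_cast this
        have hδ : δ = -α - v := hδ_def
        linarith
    exact hK.of_isClosed_subset
      (lowerSemicontinuous_iff_isClosed_preimage.mp hflsc_lsc α) hsub
  · -- inf-compact → tight
    intro hcomp
    rw [EReal.eq_bot_iff_forall_lt]
    intro r
    set β : ℝ := 1 - r with hβ_def
    set K : Set Y := {y | flsc y ≤ ((β : ℝ) : EReal)} with hK_def
    have hK : IsCompact K := hcomp β
    have h1 : (⨅ K ∈ {K : Set Y | IsCompact K}, Fall (ind Kᶜ)) ≤ Fall (ind Kᶜ) :=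
      iInf₂_le K hK
    have h2 : Fall (ind Kᶜ) ≤ Flsc (ind Kᶜ) := by
      apply iInf₂_le (ind Kᶜ)
      constructor
      · have : IsOpen Kᶜ := hK.isClosed.isOpen_compl
        exact maxplus_lsc_ind this
      · exact le_rfl
    have h3 : Flsc (ind Kᶜ) ≤ ((-β : ℝ) : EReal) := by
      apply iSup₂_le
      intro ψ hψ
      apply iSup_le
      intro y
      by_cases hy : y ∈ K
      · have : ψ y ≤ ⊥ := by
          have := hψ.2 y
          rwa [show ind Kᶜ y = ⊥ by simp [ind, hy]] at this
        rw [le_bot_iff.mp this, EReal.bot_add]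
        exact bot_le
      · have hfy : ((β : ℝ) : EReal) < flsc y := lt_of_not_ge hy
        have hfy2 : ((β : ℝ) : EReal) < f y := lt_of_lt_of_le hfy (hflsc_le y)
        have hneg : -(f y) ≤ ((-β : ℝ) : EReal) := by
          have := EReal.neg_le_neg_iff.mpr hfy2.le
          rwa [show -((β : ℝ) : EReal) = ((-β : ℝ) : EReal) by norm_cast] at this
        have hψy : ψ y ≤ 0 := by
          have := hψ.2 y
          rwa [show ind Kᶜ y = 0 by simp [ind, hy]] at this
        calc ψ y + (-(f y)) ≤ 0 + ((-β : ℝ) : EReal) := add_le_add hψy hneg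
          _ = ((-β : ℝ) : EReal) := by rw [zero_add]
    have h4 : ((-β : ℝ) : EReal) < (r : EReal) := by
      rw [hβ_def]
      exact_mod_cast (by linarith : -(1 - r) < r)
    exact lt_of_le_of_lt (le_trans h1 (le_trans h2 h3)) h4
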